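/- The relation ≺, restricted to the set of finite node-colored rooted trees in which the children of every node have pairwise distinct colors, is a strict total order: it is irreflexive, transitive, and for any two distinct such trees T and T', exactly one of T ≺ T' and T' ≺ T holds. -/

import Mathlib

/-!
Framework: acyclic decomposable AND/OR graphs (ad-AND/OR graphs), solution
subtrees, e-colorings, the contraction `π`, equivalence classes, color tuples,
compatibility, and the order `≺` on node-colored rooted trees.
-/

/-- Finite node-colored rooted trees.  Children are stored as a list; the trees
representing equivalence classes are canonical: the children of every node are
sorted strictly increasingly by their root colors (which represents faithfully
an unordered tree whose children have pairwise distinct colors). -/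
inductive CTree (C : Type u) : Type u where
  | node : C → List (CTree C) → CTree C

namespace CTree

variable {C : Type*}

/-- The color of the root of a colored tree. -/
def rootColor : CTree C → C
  | node c _ => c

/-- The child subtrees of the root. -/
def children : CTree C → List (CTree C)
  | node _ ts => ts

/-- The tuple of colors of the children of the root (in stored order; for a
canonical tree this is the increasingly sorted tuple of the children colors). -/
def rootTuple (T : CTree C) : List C := T.children.map rootColor

/-- The order `≺` on (canonical) node-colored rooted trees: `T ≺ T'` if the root
color of `T` strictly precedes the one of `T'`; if the root colors are equal,
`T ≺ T'` if the tuple of child subtrees of the root of `T` (sorted with respect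
to `≺`, i.e. by root colors for canonical trees) is lexicographically smaller
than the corresponding tuple for `T'`, the empty tree being smaller than any
tree. -/
inductive Lt [LT C] : CTree C → CTree C → Prop where
  | color {c c' : C} {ts ts' : List (CTree C)} (h : c < c') :
      Lt (node c ts) (node c' ts')
  | children {c : C} {ts ts' : List (CTree C)} (h : List.Lex Lt ts ts') :
      Lt (node c ts) (node c ts')

/-- Canonical trees: at every node, the children are sorted strictly
increasingly with respect to their root colors (in particular the children of
every node have pairwise distinct colors). -/
inductive Canonical [LT C] : CTree C → Prop where
  | node {c : C} {ts : List (CTree C)}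
      (hsorted : ts.Chain' fun a b => a.rootColor < b.rootColor)
      (hrec : ∀ t ∈ ts, Canonical t) : Canonical (node c ts)

end CTree

/-- An acyclic decomposable AND/OR graph (ad-AND/OR graph) on a finite vertex
type `V`: the vertices are partitioned into AND nodes and OR⁺ nodes, the graph
is acyclic, every arc joins an AND node and an OR⁺ node, every AND node has
in-degree and out-degree at least one, and the graph is decomposable. -/
structure AndOrGraph (V : Type*) [Fintype V] : Type _ where
  /-- the arcs of the graph -/
  Adj : V → V → Prop
  /-- the AND nodes; the remaining nodes are the OR⁺ nodes -/
  IsAnd : V → Prop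
  /-- the graph is acyclic -/
  acyclic : ∀ v, ¬ Relation.TransGen Adj v v
  /-- every arc joins an AND node and an OR⁺ node (in either direction) -/
  bipartite : ∀ u v, Adj u v → (IsAnd u ↔ ¬ IsAnd v)
  /-- every AND node has in-degree at least one -/
  and_in : ∀ v, IsAnd v → ∃ u, Adj u v
  /-- every AND node has out-degree at least one -/
  and_out : ∀ v, IsAnd v → ∃ u, Adj v u
  /-- decomposability: the sets of nodes reachable from distinct out-neighbors
  of an AND node are pairwise disjoint -/
  decomposable : ∀ x u v, IsAnd x → Adj x u → Adj x v → u ≠ v →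
    ∀ w, Relation.ReflTransGen Adj u w → Relation.ReflTransGen Adj v w → False

namespace AndOrGraph

variable {V : Type*} [Fintype V] {C : Type*} [LinearOrder C]

/-- A goal node: a node of out-degree zero. -/
def IsGoal (G : AndOrGraph V) (v : V) : Prop := ∀ u, ¬ G.Adj v u

/-- A start node of `G`: an OR⁺ node of in-degree zero. -/
def IsStart (G : AndOrGraph V) (v : V) : Prop := ¬ G.IsAnd v ∧ ∀ u, ¬ G.Adj u v

/-- `G.IsSolutionSubtree O verts root`: the subgraph of `G` induced by the
vertex set `verts` is a solution subtree of `G/O` (the elements of `O` being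
regarded as the start nodes) with root `root`: it contains exactly one start
node `root`, every node of it is reachable from `root` within it, every OR node
of it (non-goal OR⁺ node) has exactly one of its `G`-out-neighbors in it and
every AND node of it has all of its `G`-out-neighbors in it. -/
structure IsSolutionSubtree (G : AndOrGraph V) (O : Set V) (verts : Set V)
    (root : V) : Prop where
  root_start : root ∈ O
  root_mem : root ∈ verts
  unique_start : ∀ v ∈ verts, v ∈ O → v = root
  reach : ∀ v ∈ verts,
    Relation.ReflTransGen (fun a b => G.Adj a b ∧ a ∈ verts ∧ b ∈ verts) root v
  or_choice : ∀ v ∈ verts, ¬ G.IsAnd v → ¬ G.IsGoal v → ∃! u, u ∈ verts ∧ G.Adj v u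
  and_all : ∀ v ∈ verts, G.IsAnd v → ∀ u, G.Adj v u → u ∈ verts

/-- An e-coloring of `G`: a coloring of the (OR⁺) nodes such that the
out-neighbors of every AND node have pairwise distinct colors. -/
def EColoring (G : AndOrGraph V) (col : V → C) : Prop :=
  ∀ x u u', G.IsAnd x → G.Adj x u → G.Adj x u' → col u = col u' → u = u'

/-- `PiAssign G col verts f`: the function `f` assigns to every OR⁺ node `v`
of the (solution sub)tree with vertex set `verts` the contraction `π` of the
subtree rooted at `v`: a leaf of the subtree is sent to a single node of its
color, and an OR node is joined directly to the children of its AND-child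
(the AND nodes are contracted), the child subtrees being listed sorted by
their root colors. -/
def PiAssign (G : AndOrGraph V) (col : V → C) (verts : Set V)
    (f : V → CTree C) : Prop :=
  ∀ v ∈ verts, ¬ G.IsAnd v →
    ((∀ u ∈ verts, ¬ G.Adj v u) → f v = CTree.node (col v) []) ∧
    (∀ x ∈ verts, G.Adj v x → G.IsAnd x →
      ∃ ts : List (CTree C),
        f v = CTree.node (col v) ts ∧
        (∀ u, G.Adj x u → f u ∈ ts) ∧
        (∀ t ∈ ts, ∃ u, G.Adj x u ∧ f u = t) ∧
        ts.Chain' fun a b => a.rootColor < b.rootColor)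

/-- `PiAt G col verts v T`: the contraction `π` of the (solution sub)tree with
vertex set `verts` rooted at the OR⁺ node `v` is the colored tree `T`. -/
def PiAt (G : AndOrGraph V) (col : V → C) (verts : Set V) (v : V)
    (T : CTree C) : Prop :=
  ∃ f, PiAssign G col verts f ∧ v ∈ verts ∧ f v = T

/-- `T` is an equivalence class of `G/O`: `T = π(T₁)` for some solution subtree
`T₁` of `G/O`. -/
def IsClass (G : AndOrGraph V) (col : V → C) (O : Set V) (T : CTree C) : Prop :=
  ∃ verts root, G.IsSolutionSubtree O verts root ∧ PiAt G col verts root T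

/-- `r(π⁻¹(T))`: the set of roots of the solution subtrees of `G/O` belonging
to the equivalence class `T`. -/
def classRoots (G : AndOrGraph V) (col : V → C) (O : Set V) (T : CTree C) :
    Set V :=
  {o | ∃ verts, G.IsSolutionSubtree O verts o ∧ PiAt G col verts o T}

/-- `IsColorTuple G col x t`: `t = C~(x)`, the tuple of the colors of the
out-neighbors of `x` sorted in increasing order. -/
def IsColorTuple (G : AndOrGraph V) (col : V → C) (x : V) (t : List C) : Prop :=
  t.Chain' (· < ·) ∧ ∀ ci, ci ∈ t ↔ ∃ u, G.Adj x u ∧ col u = ci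

/-- `t ∈ 𝒯(O)`: `t = C~(x)` for some AND out-neighbor `x` of a node of `O`. -/
def TupleOf (G : AndOrGraph V) (col : V → C) (O : Set V) (t : List C) : Prop :=
  ∃ o ∈ O, ∃ x, G.Adj o x ∧ G.IsAnd x ∧ IsColorTuple G col x t

/-- `Chʳ(O)`: the set of AND out-neighbors of `O` whose color tuple is `t`. -/
def ChTup (G : AndOrGraph V) (col : V → C) (O : Set V) (t : List C) : Set V :=
  {x | G.IsAnd x ∧ (∃ o ∈ O, G.Adj o x) ∧ IsColorTuple G col x t}

/-- `Cʳᵢ` (for `ci` the `i`-th color of the tuple `t = tᵣ`): the set of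
out-neighbors of color `ci` of the AND nodes of `Chʳ(O)`. -/
def grandChildren (G : AndOrGraph V) (col : V → C) (O : Set V) (t : List C)
    (ci : C) : Set V :=
  {u | ∃ x ∈ ChTup G col O t, G.Adj x u ∧ col u = ci}

/-- A node `o` is compatible with the trees `Ts = (T₁, …, T_k)` (with respect to
`O` and the color tuple `t = tᵣ = (c₁, …, c_j)`, `k ≤ j`): some AND node
`x ∈ Chʳ(O)` has `o` as an out-neighbor and, for every `i ≤ k`, has an
out-neighbor that is the root of a solution subtree of `G/Cʳᵢ` of class `Tᵢ`. -/
def Compatible (G : AndOrGraph V) (col : V → C) (O : Set V) (t : List C)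
    (Ts : List (CTree C)) (o : V) : Prop :=
  ∃ x ∈ ChTup G col O t, G.Adj x o ∧
    ∀ p ∈ Ts.zip t, ∃ u, G.Adj x u ∧
      u ∈ classRoots G col (grandChildren G col O t p.2) p.1

/-- `𝒪ᵢ ⊆ Cʳᵢ`: the set of nodes of `Cʳᵢ` (for `ci` the `i`-th color of `t`)
that are compatible with the trees `Ts = (T₁, …, T_{i-1})`. -/
def compatSet (G : AndOrGraph V) (col : V → C) (O : Set V) (t : List C)
    (Ts : List (CTree C)) (ci : C) : Set V :=
  {o | o ∈ grandChildren G col O t ci ∧ Compatible G col O t Ts o}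

end AndOrGraph

variable {V : Type*} [Fintype V] {C : Type*} [LinearOrder C]

open AndOrGraph CTree

section Aux

variable {α : Type*} {r : α → α → Prop}

lemma lex_irr : ∀ (l : List α), (∀ a ∈ l, ¬ r a a) → ¬ List.Lex r l l
  | [], _, h => by cases h
  | a :: l, hall, h => by
    cases h with
    | rel h => exact hall a List.mem_cons_self h
    | cons h => exact lex_irr l (fun b hb => hall b (List.mem_cons_of_mem a hb)) h

lemma lex_trans : ∀ (l₁ l₂ l₃ : List α),
    (∀ a ∈ l₁, ∀ b c, r a b → r b c → r a c) →
    List.Lex r l₁ l₂ → List.Lex r l₂ l₃ → List.Lex r l₁ l₃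
  | _, _, l₃, _, List.Lex.nil, h₂ => by
    cases h₂ with
    | rel _ => exact List.Lex.nil
    | cons _ => exact List.Lex.nil
  | _, _, _, htr, List.Lex.rel h, h₂ => by
    cases h₂ with
    | rel h' => exact List.Lex.rel (htr _ List.mem_cons_self _ _ h h')
    | cons _ => exact List.Lex.rel h
  | _, _, _, htr, List.Lex.cons h, h₂ => by
    cases h₂ with
    | rel h' => exact List.Lex.rel h'
    | cons h' =>
      exact List.Lex.cons
        (lex_trans _ _ _ (fun a ha => htr a (List.mem_cons_of_mem _ ha)) h h')

lemma lex_total : ∀ (l₁ l₂ : List α),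
    (∀ a ∈ l₁, ∀ b, a ≠ b → r a b ∨ r b a) →
    l₁ ≠ l₂ → List.Lex r l₁ l₂ ∨ List.Lex r l₂ l₁
  | [], [], _, hne => absurd rfl hne
  | [], _ :: _, _, _ => Or.inl List.Lex.nil
  | _ :: _, [], _, _ => Or.inr List.Lex.nil
  | a :: l₁, b :: l₂, htot, hne => by
    by_cases hab : a = b
    · subst hab
      have hl : l₁ ≠ l₂ := fun h => hne (by rw [h])
      rcases lex_total l₁ l₂ (fun x hx => htot x (List.mem_cons_of_mem a hx)) hl with
        h | h
      · exact Or.inl (List.Lex.cons h)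
      · exact Or.inr (List.Lex.cons h)
    · rcases htot a List.mem_cons_self b hab with h | h
      · exact Or.inl (List.Lex.rel h)
      · exact Or.inr (List.Lex.rel h)

end Aux

namespace CTree

variable {C' : Type*} [LinearOrder C']

theorem lt_irr : ∀ (T : CTree C'), ¬ Lt T T
  | .node c ts => by
    intro h
    have hlex : List.Lex Lt ts ts := by
      cases h with
      | color h => exact absurd h (lt_irrefl c)
      | children h => exact h
    exact lex_irr ts (fun t ht => lt_irr t) hlex
termination_by T => sizeOf T
decreasing_by
  have := List.sizeOf_lt_of_mem ht
  simp only [CTree.node.sizeOf_spec]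
  omega

theorem lt_trans' : ∀ (T T' T'' : CTree C'), Lt T T' → Lt T' T'' → Lt T T''
  | .node c ts, .node c' ts', .node c'' ts'', h₁, h₂ => by
    cases h₁ with
    | color h =>
      cases h₂ with
      | color h' => exact Lt.color (lt_trans h h')
      | children _ => exact Lt.color h
    | children h =>
      cases h₂ with
      | color h' => exact Lt.color h'
      | children h' =>
        refine Lt.children (lex_trans ts ts' ts'' ?_ h h')
        intro a ha b c hab hbc
        exact lt_trans' a b c hab hbc
termination_by T T' T'' => sizeOf T
decreasing_by
  have := List.sizeOf_lt_of_mem ha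
  simp only [CTree.node.sizeOf_spec]
  omega

theorem lt_total' : ∀ (T T' : CTree C'), T ≠ T' → Lt T T' ∨ Lt T' T
  | .node c ts, .node c' ts', hne => by
    rcases lt_trichotomy c c' with h | rfl | h
    · exact Or.inl (Lt.color h)
    · have hts : ts ≠ ts' := fun h => hne (by rw [h])
      rcases lex_total ts ts' (fun a ha b hab => lt_total' a b hab) hts with h | h
      · exact Or.inl (Lt.children h)
      · exact Or.inr (Lt.children h)
    · exact Or.inr (Lt.color h)
termination_by T T' => sizeOf T
decreasing_by
  have := List.sizeOf_lt_of_mem ha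
  simp only [CTree.node.sizeOf_spec]
  omega

end CTree

/-- The relation `≺`, restricted to the set of finite
node-colored rooted trees in which the children of every node have pairwise
distinct colors (represented canonically, children sorted by color), is a
strict total order: it is irreflexive, transitive, and for any two distinct
such trees `T` and `T'`, exactly one of `T ≺ T'` and `T' ≺ T` holds. -/
theorem statement3 :
    (∀ T : CTree C, T.Canonical → ¬ T.Lt T) ∧
    (∀ T T' T'' : CTree C, T.Canonical → T'.Canonical → T''.Canonical →
      T.Lt T' → T'.Lt T'' → T.Lt T'') ∧
    (∀ T T' : CTree C, T.Canonical → T'.Canonical → T ≠ T' →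
      (T.Lt T' ∧ ¬ T'.Lt T) ∨ (T'.Lt T ∧ ¬ T.Lt T')) := by
  refine ⟨fun T _ => CTree.lt_irr T,
    fun T T' T'' _ _ _ => CTree.lt_trans' T T' T'', ?_⟩
  intro T T' _ _ hne
  rcases CTree.lt_total' T T' hne with h | h
  · exact Or.inl ⟨h, fun h' => CTree.lt_irr T (CTree.lt_trans' _ _ _ h h')⟩
  · exact Or.inr ⟨h, fun h' => CTree.lt_irr T (CTree.lt_trans' _ _ _ h' h)⟩
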